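/- Let f : ℝ → ℝ be twice continuously differentiable and let u = u(x,t) be a twice continuously differentiable solution of u_t + f(u)_x = 0 on a neighborhood of the point (0, t₀) with t₀ > 0, satisfying u(0,t) = g(t) for all t near t₀, where g is twice differentiable. If f'(g(t₀)) ≠ 0, then the second spatial derivative at the boundary satisfies u_xx(0, t₀) = ( f'(g(t₀)) g''(t₀) − 2 f''(g(t₀)) g'(t₀)² ) / f'(g(t₀))³. -/

import Mathlib

/-- Second order inverse Lax-Wendroff identity: for a `C²` solution of
`u_t + f(u)_x = 0` near the boundary point `(0, t₀)` with boundary data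
`u(0,t) = g(t)`, if `f'(g(t₀)) ≠ 0` then
`u_xx(0,t₀) = (f'(g(t₀)) g''(t₀) − 2 f''(g(t₀)) g'(t₀)²) / f'(g(t₀))³`. -/
theorem stmt2 (f : ℝ → ℝ) (hf : ContDiff ℝ 2 f)
    (u : ℝ → ℝ → ℝ) (g : ℝ → ℝ) (t₀ : ℝ) (ht₀ : 0 < t₀)
    (V : Set (ℝ × ℝ)) (hV : IsOpen V) (hmem : ((0 : ℝ), t₀) ∈ V)
    (hu : ContDiffOn ℝ 2 (fun p : ℝ × ℝ => u p.1 p.2) V)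
    (hpde : ∀ x t : ℝ, (x, t) ∈ V →
      deriv (fun s => u x s) t + deriv (fun y => f (u y t)) x = 0)
    (hbc : ∀ᶠ t in nhds t₀, u 0 t = g t)
    (hg : ∀ᶠ t in nhds t₀, DifferentiableAt ℝ g t)
    (hg' : DifferentiableAt ℝ (deriv g) t₀)
    (hne : deriv f (g t₀) ≠ 0) :
    deriv (fun x => deriv (fun y => u y t₀) x) 0 =
      (deriv f (g t₀) * deriv (deriv g) t₀
        - 2 * deriv (deriv f) (g t₀) * (deriv g t₀) ^ 2) / (deriv f (g t₀)) ^ 3 := by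
  set w : ℝ × ℝ → ℝ := fun p => u p.1 p.2 with hwdef
  have hVnhds : V ∈ nhds ((0:ℝ), t₀) := hV.mem_nhds hmem
  have hw2 : ∀ p ∈ V, ContDiffAt ℝ 2 w p := fun p hp => hu.contDiffAt (hV.mem_nhds hp)
  have hwd : ∀ p ∈ V, HasFDerivAt w (fderiv ℝ w p) p := fun p hp =>
    ((hw2 p hp).differentiableAt (by norm_num)).hasFDerivAt
  have hcurx : ∀ x t : ℝ, HasDerivAt (fun y : ℝ => (y, t)) ((1:ℝ), (0:ℝ)) x :=
    fun x t => (hasDerivAt_id x).prodMk (hasDerivAt_const x t)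
  have hcurt : ∀ x t : ℝ, HasDerivAt (fun s : ℝ => (x, s)) ((0:ℝ), (1:ℝ)) t :=
    fun x t => (hasDerivAt_const t x).prodMk (hasDerivAt_id t)
  have hdx : ∀ p ∈ V, HasDerivAt (fun y => u y p.2) (fderiv ℝ w p (1, 0)) p.1 :=
    fun p hp => by have := (hwd p hp).comp_hasDerivAt p.1 (hcurx p.1 p.2); exact this
  have hdt : ∀ p ∈ V, HasDerivAt (fun s => u p.1 s) (fderiv ℝ w p (0, 1)) p.2 :=
    fun p hp => by have := (hwd p hp).comp_hasDerivAt p.2 (hcurt p.1 p.2); exact this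
  have hfd : ∀ y : ℝ, HasDerivAt f (deriv f y) y :=
    fun y => ((hf.differentiable (by norm_num)) y).hasDerivAt
  have hf'C1 : ContDiff ℝ 1 (deriv f) := by
    have h2 : ContDiff ℝ ((1 : ℕ) + 1) f := by exact_mod_cast hf
    exact (contDiff_succ_iff_deriv.mp (by exact_mod_cast h2)).2.2
  have hfd' : ∀ y : ℝ, HasDerivAt (deriv f) (deriv (deriv f) y) y :=
    fun y => ((hf'C1.differentiable one_ne_zero) y).hasDerivAt
  have hpde' : ∀ p ∈ V, fderiv ℝ w p (0, 1) + deriv f (w p) * fderiv ℝ w p (1, 0) = 0 := by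
    intro p hp
    have h1 : deriv (fun s => u p.1 s) p.2 = fderiv ℝ w p (0, 1) := (hdt p hp).deriv
    have h2 : deriv (fun y => f (u y p.2)) p.1 = deriv f (w p) * fderiv ℝ w p (1, 0) :=
      ((hfd (w p)).comp p.1 (hdx p hp)).deriv
    have h3 := hpde p.1 p.2 hp
    rw [h1, h2] at h3
    exact h3
  -- second derivative
  have hΦ : ContDiffOn ℝ 1 (fderiv ℝ w) V := hu.fderiv_of_isOpen hV (by norm_num)
  have hΦd : DifferentiableAt ℝ (fderiv ℝ w) ((0:ℝ), t₀) :=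
    (hΦ.contDiffAt hVnhds).differentiableAt one_ne_zero
  set S := fderiv ℝ (fderiv ℝ w) ((0:ℝ), t₀) with hSdef
  have hΦS : HasFDerivAt (fderiv ℝ w) S ((0:ℝ), t₀) := hΦd.hasFDerivAt
  have hsymm : ∀ v v' : ℝ × ℝ, S v v' = S v' v := fun v v' =>
    second_derivative_symmetric_of_eventually
      (Filter.eventually_of_mem hVnhds hwd) hΦS v v'
  have happ : ∀ v : ℝ × ℝ, HasFDerivAt (fun p => fderiv ℝ w p v)
      ((ContinuousLinearMap.apply ℝ ℝ v).comp S) ((0:ℝ), t₀) :=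
    fun v => (ContinuousLinearMap.apply ℝ ℝ v).hasFDerivAt.comp _ hΦS
  have hAt : HasDerivAt (fun t => fderiv ℝ w (0, t) (1, 0)) (S (0, 1) (1, 0)) t₀ := by
    have := (happ (1, 0)).comp_hasDerivAt t₀ (hcurt 0 t₀)
    exact this
  have hBx : HasDerivAt (fun x => fderiv ℝ w (x, t₀) (0, 1)) (S (1, 0) (0, 1)) 0 := by
    have := (happ (0, 1)).comp_hasDerivAt 0 (hcurx 0 t₀)
    exact this
  have hAx : HasDerivAt (fun x => fderiv ℝ w (x, t₀) (1, 0)) (S (1, 0) (1, 0)) 0 := by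
    have := (happ (1, 0)).comp_hasDerivAt 0 (hcurx 0 t₀)
    exact this
  -- neighborhoods along the axes
  have hVt : ∀ᶠ t in nhds t₀, ((0:ℝ), t) ∈ V :=
    ((continuous_const.prodMk continuous_id).continuousAt).preimage_mem_nhds hVnhds
  have hVx : ∀ᶠ x in nhds (0:ℝ), (x, t₀) ∈ V :=
    ((continuous_id.prodMk continuous_const).continuousAt).preimage_mem_nhds hVnhds
  -- boundary data
  have hg0 : w (0, t₀) = g t₀ := hbc.self_of_nhds
  have hgd : ∀ᶠ t in nhds t₀, deriv (fun s => u 0 s) t = deriv g t := by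
    filter_upwards [hbc.eventually_nhds] with t ht
    exact Filter.EventuallyEq.deriv_eq ht
  have hc : fderiv ℝ w ((0:ℝ), t₀) (0, 1) = deriv g t₀ :=
    ((hdt ((0:ℝ), t₀) hmem).deriv).symm.trans hgd.self_of_nhds
  -- time identity
  have hE : ∀ᶠ t in nhds t₀,
      deriv g t + deriv f (w (0, t)) * fderiv ℝ w (0, t) (1, 0) = 0 := by
    filter_upwards [hVt, hgd] with t h1 h2
    have h3 := hpde' (0, t) h1
    have h4 : fderiv ℝ w ((0:ℝ), t) (0, 1) = deriv g t :=
      ((hdt ((0:ℝ), t) h1).deriv).symm.trans h2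
    rw [h4] at h3
    exact h3
  have hwt0 : HasDerivAt (fun t => w (0, t)) (deriv g t₀) t₀ := hc ▸ hdt ((0:ℝ), t₀) hmem
  have hφ : HasDerivAt (fun t => deriv f (w (0, t)))
      (deriv (deriv f) (g t₀) * deriv g t₀) t₀ := by
    have := (hfd' (w (0, t₀))).comp t₀ hwt0
    rw [hg0] at this
    exact this
  have hT := (hg'.hasDerivAt).add (hφ.mul hAt)
  rw [hg0] at hT
  have hEq : (fun t => deriv g t + deriv f (w (0, t)) * fderiv ℝ w (0, t) (1, 0))
      =ᶠ[nhds t₀] (fun _ => (0:ℝ)) := hE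
  have eq2 : deriv (deriv g) t₀ +
      (deriv (deriv f) (g t₀) * deriv g t₀ * fderiv ℝ w (0, t₀) (1, 0)
        + deriv f (g t₀) * S (0, 1) (1, 0)) = 0 :=
    (hT.congr_of_eventuallyEq hEq.symm).unique (hasDerivAt_const t₀ 0)
  have eq1 : deriv g t₀ + deriv f (g t₀) * fderiv ℝ w ((0:ℝ), t₀) (1, 0) = 0 := by
    have := hE.self_of_nhds
    rw [hg0] at this
    exact this
  -- spatial identity
  have hEx : ∀ᶠ x in nhds (0:ℝ),
      fderiv ℝ w (x, t₀) (0, 1) + deriv f (w (x, t₀)) * fderiv ℝ w (x, t₀) (1, 0) = 0 := by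
    filter_upwards [hVx] with x hx using hpde' (x, t₀) hx
  have hwx0 : HasDerivAt (fun x => w (x, t₀)) (fderiv ℝ w ((0:ℝ), t₀) (1, 0)) 0 :=
    hdx ((0:ℝ), t₀) hmem
  have hψ : HasDerivAt (fun x => deriv f (w (x, t₀)))
      (deriv (deriv f) (g t₀) * fderiv ℝ w ((0:ℝ), t₀) (1, 0)) 0 := by
    have := (hfd' (w (0, t₀))).comp 0 hwx0
    rw [hg0] at this
    exact this
  have hTx := hBx.add (hψ.mul hAx)
  rw [hg0] at hTx
  have hEqx : (fun x => fderiv ℝ w (x, t₀) (0, 1)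
      + deriv f (w (x, t₀)) * fderiv ℝ w (x, t₀) (1, 0)) =ᶠ[nhds (0:ℝ)] (fun _ => (0:ℝ)) := hEx
  have eq3 : S (1, 0) (0, 1) +
      (deriv (deriv f) (g t₀) * fderiv ℝ w ((0:ℝ), t₀) (1, 0) * fderiv ℝ w (0, t₀) (1, 0)
        + deriv f (g t₀) * S (1, 0) (1, 0)) = 0 :=
    (hTx.congr_of_eventuallyEq hEqx.symm).unique (hasDerivAt_const 0 0)
  -- rewrite goal
  have hgoal1 : (fun x => deriv (fun y => u y t₀) x)
      =ᶠ[nhds (0:ℝ)] (fun x => fderiv ℝ w (x, t₀) (1, 0)) := by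
    filter_upwards [hVx] with x hx using (hdx (x, t₀) hx).deriv
  rw [Filter.EventuallyEq.deriv_eq hgoal1, hAx.deriv]
  rw [hsymm (1, 0) (0, 1)] at eq3
  rw [eq_div_iff (pow_ne_zero 3 hne)]
  set a := deriv f (g t₀)
  set b := deriv (deriv f) (g t₀)
  set c := deriv g t₀
  set d := deriv (deriv g) t₀
  set A₀ := fderiv ℝ w ((0:ℝ), t₀) (1, 0)
  set S01 := S (0, 1) (1, 0)
  set S11 := S (1, 0) (1, 0)
  linear_combination (-(b * (a * A₀ - 2 * c))) * eq1 + (-a) * eq2 + (a ^ 2) * eq3
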